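/- Let μ > 0, σ > 0 with μ ≠ σ²/2, γ > 0 with 0 < μ/(γσ²) < 1, write π* = μ/(γσ²), and let ε₀ > 0 and λ : (0, ε₀) → (0, μ) satisfy μ + λ(ε) < γσ² for all ε and λ(ε) = γσ²·( (3/(4γ))·π*²·(1−π*)² )^{1/3}·ε^{1/3} + O(ε) as ε ↓ 0. Define π₋(ε) = (μ−λ(ε))/(γσ²), π₊(ε) = (μ+λ(ε))/(γσ²), R(ε) = (1/(1−ε))·( (μ+λ(ε))·(γσ² − μ + λ(ε)) ) / ( (μ−λ(ε))·(γσ² − μ − λ(ε)) ), and the average wealth turnover WeT(ε) = (σ²/2)·(2μ/σ² − 1)·( π₋(ε)(1−π₋(ε))/(R(ε)^{2μ/σ² − 1} − 1) − π₊(ε)(1−π₊(ε))/(R(ε)^{1 − 2μ/σ²} − 1) ). Then WeT(ε) = (2γσ²/3)·( (3/(4γ))·π*²·(1−π*)² )^{2/3}·ε^{−1/3} + O(ε^{1/3}) as ε ↓ 0. -/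

import Mathlib

open Asymptotics

open Filter Real Finset Topology

lemma log_taylor_aux {x : ℝ} (hx : |x| ≤ 1/2) :
    |Real.log (1+x) - (x - x^2/2)| ≤ 2 * |x|^3 := by
  have h := Real.abs_log_sub_add_sum_range_le (x := -x) (by rw [abs_neg]; linarith) 2
  have hsum : (∑ i ∈ range 2, (-x) ^ (i + 1) / (i + 1)) = -x + x^2/2 := by
    simp [Finset.sum_range_succ]; ring
  rw [hsum, abs_neg] at h
  have h2 : (1:ℝ) - (-x) = 1 + x := by ring
  rw [h2] at h
  have h3 : |(-x + x ^ 2 / 2) + Real.log (1+x)| = |Real.log (1+x) - (x - x^2/2)| := by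
    congr 1; ring
  rw [h3] at h
  have h4 : |x| ^ 3 / (1 - |x|) ≤ 2 * |x| ^ 3 := by
    rw [div_le_iff₀ (by linarith [abs_nonneg x] : (0:ℝ) < 1 - |x|)]
    nlinarith [pow_nonneg (abs_nonneg x) 3, abs_nonneg x]
  linarith

lemma exp_taylor_aux {x : ℝ} (hx : |x| ≤ 1) :
    |Real.exp x - (1 + x + x^2/2)| ≤ |x|^3 := by
  have h := Real.exp_bound hx (n := 3) (by norm_num)
  have hsum : (∑ m ∈ range 3, x ^ m / m.factorial) = 1 + x + x^2/2 := by
    simp [Finset.sum_range_succ, Nat.factorial]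
  rw [hsum] at h
  have h2 : |x| ^ 3 * ((3:ℕ).succ / ((3:ℕ).factorial * 3)) ≤ |x|^3 := by
    have h3 : (((3:ℕ).succ : ℝ) / (((3:ℕ).factorial : ℝ) * 3)) = 2/9 := by
      norm_num [Nat.factorial]
    rw [h3]
    nlinarith [pow_nonneg (abs_nonneg x) 3]
  linarith

lemma exp_lower_aux {x : ℝ} (hx : |x| ≤ 1) : |x|/3 ≤ |Real.exp x - 1| := by
  rcases le_or_gt 0 x with h | h
  · rw [abs_of_nonneg h,
      abs_of_nonneg (by linarith [Real.add_one_le_exp x] : (0:ℝ) ≤ Real.exp x - 1)]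
    linarith [Real.add_one_le_exp x]
  · have hx1 : -1 ≤ x := by rw [abs_of_neg h] at hx; linarith
    have h1x : (0:ℝ) < 1 - x := by linarith
    have hneg : 1 - x ≤ Real.exp (-x) := by
      have := Real.add_one_le_exp (-x); linarith
    have hex : Real.exp x * (1 - x) ≤ 1 := by
      calc Real.exp x * (1-x) ≤ Real.exp x * Real.exp (-x) := by
            exact mul_le_mul_of_nonneg_left hneg (Real.exp_pos x).le
        _ = 1 := by rw [← Real.exp_add]; simp
    have hex2 : Real.exp x ≤ 1/(1-x) := by
      rw [le_div_iff₀ h1x]; exact hex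
    have hlt : Real.exp x - 1 ≤ x/(1-x) := by
      have : (1:ℝ)/(1-x) - 1 = x/(1-x) := by field_simp; ring
      linarith
    have hfin : x/(1-x) ≤ x/3 := by
      rw [div_le_div_iff₀ h1x (by norm_num)]
      nlinarith
    rw [abs_of_neg h, abs_of_neg (show Real.exp x - 1 < 0 by
      have := Real.exp_lt_one_iff.mpr h; linarith)]
    linarith

set_option maxHeartbeats 4000000 in
/-- Asymptotics of the long-term average wealth turnover:
`WeT(ε) = (2γσ²/3)·((3/(4γ))·π*²·(1-π*)²)^{2/3}·ε^{-1/3} + O(ε^{1/3})`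
as `ε ↓ 0`. -/
theorem wealth_turnover_asymptotics
    (μ σ γ : ℝ) (hμ : 0 < μ) (hσ : 0 < σ) (hdrift : μ ≠ σ ^ 2 / 2) (hγ : 0 < γ)
    (hmerton : 0 < μ / (γ * σ ^ 2)) (hmerton1 : μ / (γ * σ ^ 2) < 1)
    (πs : ℝ) (hπs : πs = μ / (γ * σ ^ 2))
    (ε₀ : ℝ) (hε₀ : 0 < ε₀) (lam : ℝ → ℝ)
    (hmem : ∀ ε ∈ Set.Ioo (0 : ℝ) ε₀, lam ε ∈ Set.Ioo 0 μ)
    (hlev : ∀ ε ∈ Set.Ioo (0 : ℝ) ε₀, μ + lam ε < γ * σ ^ 2)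
    (hlam : (fun ε : ℝ => lam ε
        - γ * σ ^ 2 * ((3 / (4 * γ)) * πs ^ 2 * (1 - πs) ^ 2) ^ ((1 : ℝ) / 3)
          * ε ^ ((1 : ℝ) / 3))
      =O[nhdsWithin 0 (Set.Ioi 0)] fun ε : ℝ => ε)
    (πm πp R WeT : ℝ → ℝ)
    (hπm : πm = fun ε : ℝ => (μ - lam ε) / (γ * σ ^ 2))
    (hπp : πp = fun ε : ℝ => (μ + lam ε) / (γ * σ ^ 2))
    (hR : R = fun ε : ℝ => (1 / (1 - ε))
      * ((μ + lam ε) * (γ * σ ^ 2 - μ + lam ε))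
      / ((μ - lam ε) * (γ * σ ^ 2 - μ - lam ε)))
    (hWeT : WeT = fun ε : ℝ => (σ ^ 2 / 2) * (2 * μ / σ ^ 2 - 1)
      * (πm ε * (1 - πm ε) / (R ε ^ (2 * μ / σ ^ 2 - 1) - 1)
        - πp ε * (1 - πp ε) / (R ε ^ (1 - 2 * μ / σ ^ 2) - 1))) :
    (fun ε : ℝ => WeT ε
        - (2 * γ * σ ^ 2 / 3)
          * ((3 / (4 * γ)) * πs ^ 2 * (1 - πs) ^ 2) ^ ((2 : ℝ) / 3)
          * ε ^ (-(1 : ℝ) / 3))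
      =O[nhdsWithin 0 (Set.Ioi 0)] fun ε : ℝ => ε ^ ((1 : ℝ) / 3) := by
  have hσ2 : (0:ℝ) < σ ^ 2 := by positivity
  have hs0 : (0:ℝ) < γ * σ ^ 2 := by positivity
  have hπs0 : 0 < πs := hπs ▸ hmerton
  have hπs1 : πs < 1 := hπs ▸ hmerton1
  have hμs : μ = πs * (γ * σ ^ 2) := by rw [hπs]; field_simp
  set l := nhdsWithin (0:ℝ) (Set.Ioi 0) with hldef
  set X : ℝ := πs * (1 - πs) with hXdef
  have hX0 : 0 < X := by rw [hXdef]; nlinarith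
  set A : ℝ := (3 / (4 * γ)) * πs ^ 2 * (1 - πs) ^ 2 with hAdef
  have hA0 : 0 < A := by
    rw [hAdef]
    have h1 : (0:ℝ) < 1 - πs := by linarith
    positivity
  set a : ℝ := A ^ ((1:ℝ)/3) with hadef
  have ha0 : 0 < a := Real.rpow_pos_of_pos hA0 _
  set b : ℝ := 2 * a / X with hbdef
  have hb0 : 0 < b := by rw [hbdef]; positivity
  set p : ℝ := 2 * μ / σ ^ 2 - 1 with hpdef
  have hp0 : p ≠ 0 := by
    intro h
    apply hdrift
    have h2 : 2 * μ / σ ^ 2 = 1 := by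
      have := hpdef ▸ h; linarith [this]
    field_simp at h2
    linarith
  set q : ℝ := p * b with hqdef
  have hq0 : q ≠ 0 := mul_ne_zero hp0 hb0.ne'
  set C : ℝ := 2 * γ * σ ^ 2 / 3 * A ^ ((2:ℝ)/3) with hCdef
  set w : ℝ → ℝ := fun ε => ε ^ ((1:ℝ)/3) with hwdef
  set δ : ℝ → ℝ := fun ε => lam ε / (γ * σ ^ 2) with hδdef
  have hδε : ∀ ε, δ ε = lam ε / (γ * σ ^ 2) := fun ε => by rw [hδdef]
  have hwε : ∀ ε, w ε = ε ^ ((1:ℝ)/3) := fun ε => by rw [hwdef]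
  have hlamδ : ∀ ε, lam ε = δ ε * (γ * σ ^ 2) := by
    intro ε; rw [hδε]; field_simp
  -- C in terms of a and X
  have hA23 : A ^ ((2:ℝ)/3) * a = A := by
    rw [hadef, ← Real.rpow_add hA0]; norm_num
  have hCa : C * (2 * a) = σ ^ 2 * X ^ 2 := by
    have hXA : X ^ 2 = 4 * γ / 3 * A := by rw [hXdef, hAdef]; field_simp
    rw [hCdef, hXA]
    have h1 : 2 * γ * σ ^ 2 / 3 * A ^ ((2:ℝ)/3) * (2 * a)
        = 4 * γ * σ ^ 2 / 3 * (A ^ ((2:ℝ)/3) * a) := by ring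
    rw [h1, hA23]; ring
  have hCq : C * q = σ ^ 2 * p * X := by
    have hbX : b * X = 2 * a := by rw [hbdef]; field_simp
    have h1 : C * q * X = σ ^ 2 * p * X * X := by
      calc C * q * X = C * (b * X) * p := by rw [hqdef]; ring
        _ = C * (2 * a) * p := by rw [hbX]
        _ = σ ^ 2 * X ^ 2 * p := by rw [hCa]
        _ = σ ^ 2 * p * X * X := by ring
    exact mul_right_cancel₀ hX0.ne' h1
  have hCval : C = σ ^ 2 * p * X / q := by rw [eq_div_iff hq0]; exact hCq
  -- base eventual facts
  have hbase : ∀ᶠ ε in l, ε ∈ Set.Ioo (0:ℝ) (min ε₀ (1/2)) :=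
    Ioo_mem_nhdsGT (lt_min hε₀ (by norm_num))
  have hpos : ∀ᶠ ε in l, (0:ℝ) < ε := by
    filter_upwards [hbase] with ε hε using hε.1
  have hδeb : ∀ᶠ ε in l, 0 < δ ε ∧ δ ε < πs ∧ πs + δ ε < 1 ∧ 0 < ε ∧ ε ≤ 1/2 := by
    filter_upwards [hbase] with ε hε
    have hε' : ε ∈ Set.Ioo 0 ε₀ := ⟨hε.1, lt_of_lt_of_le hε.2 (min_le_left _ _)⟩
    obtain ⟨hl0, hlμ⟩ := hmem ε hε'
    have h2 := hlev ε hε'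
    have hδv := hδε ε
    refine ⟨by rw [hδv]; positivity, ?_, ?_, hε.1,
      le_of_lt (lt_of_lt_of_le hε.2 (min_le_right _ _))⟩
    · rw [hδv, hπs]
      gcongr
    · have h3 : πs + δ ε = (μ + lam ε) / (γ * σ ^ 2) := by
        rw [hδv, hπs, ← add_div]
      rw [h3, div_lt_one hs0]
      exact h2
  -- tendsto and basic big-O facts
  have hidt : Tendsto (fun ε : ℝ => ε) l (𝓝 0) :=
    tendsto_id.mono_left nhdsWithin_le_nhds
  have hwt : Tendsto w l (𝓝 0) := by
    have h := hidt.rpow_const (p := (1:ℝ)/3) (Or.inr (by norm_num))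
    rw [Real.zero_rpow (by norm_num : (1:ℝ)/3 ≠ 0)] at h
    exact h
  have hwpos : ∀ᶠ ε in l, 0 < w ε := by
    filter_upwards [hpos] with ε hε
    rw [hwε]; positivity
  have hw3 : ∀ᶠ ε in l, w ε * w ε * w ε = ε := by
    filter_upwards [hpos] with ε hε
    rw [hwε, ← Real.rpow_add hε, ← Real.rpow_add hε]
    norm_num
  have hid_w3 : (fun ε : ℝ => ε) =ᶠ[l] fun ε => w ε * w ε * w ε := by
    filter_upwards [hw3] with ε h using h.symm
  have hw3_id : (fun ε => w ε * w ε * w ε) =O[l] (fun ε : ℝ => ε) :=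
    (Filter.EventuallyEq.symm hid_w3).isBigO
  have hw1 : w =O[l] (fun _ : ℝ => (1:ℝ)) := hwt.isBigO_one ℝ
  have hid1 : (fun ε : ℝ => ε) =O[l] (fun _ : ℝ => (1:ℝ)) := hidt.isBigO_one ℝ
  have hid_w : (fun ε : ℝ => ε) =O[l] w := by
    refine hid_w3.trans_isBigO ?_
    have h1 : (fun ε => w ε * w ε * w ε) =O[l] (fun ε => 1 * 1 * w ε) :=
      (hw1.mul hw1).mul (isBigO_refl w l)
    exact h1.trans (isBigO_of_le _ (fun ε => by simp))
  have hOwww : ∀ f g h : ℝ → ℝ, f =O[l] w → g =O[l] w → h =O[l] w →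
      (fun ε => f ε * g ε * h ε) =O[l] (fun ε : ℝ => ε) :=
    fun f g h hf hg hh => ((hf.mul hg).mul hh).trans hw3_id
  -- delta estimates
  have hδa : (fun ε => δ ε - a * w ε) =O[l] (fun ε : ℝ => ε) := by
    have heq : (fun ε => δ ε - a * w ε)
        = fun ε => (γ * σ ^ 2)⁻¹
            * (lam ε - γ * σ ^ 2 * a * ε ^ ((1:ℝ)/3)) := by
      funext ε; rw [hδε, hwε]; field_simp
    rw [heq]
    exact hlam.const_mul_left _
  have hδw : δ =O[l] w := by
    have h1 : δ = fun ε => (δ ε - a * w ε) + a * w ε := by funext ε; ring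
    rw [h1]
    exact (hδa.trans hid_w).add ((isBigO_refl w l).const_mul_left a)
  have hδ1 : δ =O[l] (fun _ : ℝ => (1:ℝ)) := hδw.trans hw1
  have hδt : Tendsto δ l (𝓝 0) := hδw.trans_tendsto hwt
  have hδδw : (fun ε => δ ε * δ ε) =O[l] w :=
    (hδw.mul hδ1).trans (isBigO_of_le _ (fun ε => by simp))
  -- rewrite of R
  have hDpos : ∀ᶠ ε in l, 0 < X - δ ε + δ ε * δ ε ∧ 0 < X + δ ε + δ ε * δ ε
      ∧ 0 < 1 - ε := by
    filter_upwards [hδeb] with ε ⟨h1, h2, h3, h4, h5⟩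
    have hD : X - δ ε + δ ε * δ ε = (πs - δ ε) * (1 - πs - δ ε) := by
      rw [hXdef]; ring
    have hN : X + δ ε + δ ε * δ ε = (πs + δ ε) * (1 - πs + δ ε) := by
      rw [hXdef]; ring
    refine ⟨?_, ?_, by linarith⟩
    · rw [hD]; have : 0 < πs - δ ε := by linarith
      have h6 : 0 < 1 - πs - δ ε := by linarith
      positivity
    · rw [hN]; have : 0 < πs + δ ε := by linarith
      have h6 : 0 < 1 - πs + δ ε := by linarith
      positivity
  have hReq : ∀ᶠ ε in l, R ε
      = (X + δ ε + δ ε * δ ε) / ((X - δ ε + δ ε * δ ε) * (1 - ε)) := by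
    filter_upwards [hδeb, hDpos] with ε ⟨h1, h2, h3, h4, h5⟩ ⟨hD, hN, hε1⟩
    rw [hR]
    simp only []
    have hDne : X - δ ε + δ ε * δ ε ≠ 0 := hD.ne'
    have hε1ne : (1:ℝ) - ε ≠ 0 := hε1.ne'
    have e1 : (μ + lam ε) * (γ * σ ^ 2 - μ + lam ε)
        = (γ * σ ^ 2) ^ 2 * (X + δ ε + δ ε * δ ε) := by
      rw [hμs, hlamδ ε, hXdef]; ring
    have e2 : (μ - lam ε) * (γ * σ ^ 2 - μ - lam ε)
        = (γ * σ ^ 2) ^ 2 * (X - δ ε + δ ε * δ ε) := by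
      rw [hμs, hlamδ ε, hXdef]; ring
    rw [e1, e2]
    field_simp
  have hRpos : ∀ᶠ ε in l, 0 < R ε := by
    filter_upwards [hReq, hDpos] with ε h ⟨hD, hN, hε1⟩
    rw [h]; positivity
  -- log expansion
  set n1 : ℝ → ℝ := fun ε => (δ ε + δ ε * δ ε) / X with hn1def
  set n2 : ℝ → ℝ := fun ε => (-δ ε + δ ε * δ ε) / X with hn2def
  have hn1w : n1 =O[l] w := by
    have heq : n1 = fun ε => X⁻¹ * (δ ε + δ ε * δ ε) := by
      funext ε; rw [hn1def]; field_simp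
    rw [heq]
    exact (hδw.add hδδw).const_mul_left _
  have hn2w : n2 =O[l] w := by
    have heq : n2 = fun ε => X⁻¹ * (-δ ε + δ ε * δ ε) := by
      funext ε; rw [hn2def]; field_simp
    rw [heq]
    exact ((hδw.neg_left).add hδδw).const_mul_left _
  have hn1t : Tendsto n1 l (𝓝 0) := hn1w.trans_tendsto hwt
  have hn2t : Tendsto n2 l (𝓝 0) := hn2w.trans_tendsto hwt
  have hn1half : ∀ᶠ ε in l, |n1 ε| ≤ 1/2 := by
    have h := Metric.tendsto_nhds.mp hn1t (1/2) (by norm_num)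
    filter_upwards [h] with ε hε
    rw [Real.dist_eq, sub_zero] at hε; exact hε.le
  have hn2half : ∀ᶠ ε in l, |n2 ε| ≤ 1/2 := by
    have h := Metric.tendsto_nhds.mp hn2t (1/2) (by norm_num)
    filter_upwards [h] with ε hε
    rw [Real.dist_eq, sub_zero] at hε; exact hε.le
  have hn1pos : ∀ᶠ ε in l, 0 < 1 + n1 ε ∧ 0 < 1 + n2 ε := by
    filter_upwards [hn1half, hn2half] with ε h1 h2
    constructor <;> [cases' abs_le.mp h1 with ha hb; cases' abs_le.mp h2 with ha hb] <;> linarith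
  have hlogReq : ∀ᶠ ε in l, Real.log (R ε)
      = Real.log (1 + n1 ε) - Real.log (1 + n2 ε) - Real.log (1 - ε) := by
    filter_upwards [hReq, hDpos, hn1pos] with ε h ⟨hD, hN, hε1⟩ ⟨hp1, hp2⟩
    have e1 : X + δ ε + δ ε * δ ε = X * (1 + n1 ε) := by
      rw [hn1def]; field_simp; ring
    have e2 : X - δ ε + δ ε * δ ε = X * (1 + n2 ε) := by
      rw [hn2def]; field_simp; ring
    rw [h, e1, e2]
    rw [Real.log_div (by positivity) (by positivity),
      Real.log_mul (by positivity) hp1.ne',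
      Real.log_mul (by positivity) hε1.ne',
      Real.log_mul hX0.ne' hp2.ne']
    ring
  have habs3 : ∀ x : ℝ, |x| ^ 3 = |x * x * x| := fun x => by
    rw [abs_mul, abs_mul]; ring
  -- Taylor remainders for log
  have hcube : ∀ f : ℝ → ℝ, f =O[l] w → (fun ε => f ε * f ε * f ε) =O[l] (fun ε : ℝ => ε) :=
    fun f hf => hOwww f f f hf hf hf
  have hr1O : (fun ε => Real.log (1 + n1 ε) - (n1 ε - n1 ε ^ 2 / 2)) =O[l] (fun ε : ℝ => ε) := by
    refine IsBigO.trans ?_ (hcube n1 hn1w)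
    rw [isBigO_iff]
    refine ⟨2, ?_⟩
    filter_upwards [hn1half] with ε h
    have := log_taylor_aux h
    rw [Real.norm_eq_abs, Real.norm_eq_abs]
    calc |Real.log (1 + n1 ε) - (n1 ε - n1 ε ^ 2 / 2)| ≤ 2 * |n1 ε| ^ 3 := this
      _ = 2 * |n1 ε * n1 ε * n1 ε| := by rw [← habs3]
  have hr2O : (fun ε => Real.log (1 + n2 ε) - (n2 ε - n2 ε ^ 2 / 2)) =O[l] (fun ε : ℝ => ε) := by
    refine IsBigO.trans ?_ (hcube n2 hn2w)
    rw [isBigO_iff]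
    refine ⟨2, ?_⟩
    filter_upwards [hn2half] with ε h
    have := log_taylor_aux h
    rw [Real.norm_eq_abs, Real.norm_eq_abs]
    calc |Real.log (1 + n2 ε) - (n2 ε - n2 ε ^ 2 / 2)| ≤ 2 * |n2 ε| ^ 3 := this
      _ = 2 * |n2 ε * n2 ε * n2 ε| := by rw [← habs3]
  have hlog1ε : (fun ε : ℝ => Real.log (1 - ε)) =O[l] (fun ε : ℝ => ε) := by
    rw [isBigO_iff]
    refine ⟨2, ?_⟩
    filter_upwards [hδeb] with ε ⟨h1, h2, h3, h4, h5⟩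
    have habs : |(-ε)| ≤ 1/2 := by rw [abs_neg, abs_of_pos h4]; linarith
    have := log_taylor_aux habs
    rw [show (1:ℝ) + -ε = 1 - ε by ring] at this
    rw [Real.norm_eq_abs, Real.norm_eq_abs, abs_of_pos h4]
    have h6 : |(-ε)| = ε := by rw [abs_neg, abs_of_pos h4]
    rw [h6] at this
    have h7 : |Real.log (1 - ε)| - |(-ε - (-ε) ^ 2 / 2)| ≤ 2 * ε ^ 3 := by
      have := abs_sub_abs_le_abs_sub (Real.log (1 - ε)) (-ε - (-ε) ^ 2 / 2)
      linarith
    have h8 : |(-ε - (-ε) ^ 2 / 2)| = ε + ε ^ 2 / 2 := by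
      rw [show -ε - (-ε) ^ 2 / 2 = -(ε + ε ^ 2 / 2) by ring, abs_neg,
        abs_of_pos (by positivity)]
    rw [h8] at h7
    nlinarith
  -- main log estimate
  have hlogbw : (fun ε => Real.log (R ε) - b * w ε) =O[l] (fun ε : ℝ => ε) := by
    have hsplit : (fun ε => Real.log (R ε) - b * w ε) =ᶠ[l]
        fun ε => (Real.log (1 + n1 ε) - (n1 ε - n1 ε ^ 2 / 2))
          - (Real.log (1 + n2 ε) - (n2 ε - n2 ε ^ 2 / 2))
          - Real.log (1 - ε)
          + (2 / X) * (δ ε - a * w ε)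
          - (2 / (X * X)) * (δ ε * δ ε * δ ε) := by
      filter_upwards [hlogReq] with ε h
      rw [h, hn1def, hn2def, hbdef]
      field_simp
      ring
    refine Filter.EventuallyEq.trans_isBigO hsplit ?_
    exact ((((hr1O.sub hr2O).sub hlog1ε).add (hδa.const_mul_left (2 / X))).sub
      ((hcube δ hδw).const_mul_left (2 / (X * X))))
  -- the function u = p log R
  set u : ℝ → ℝ := fun ε => p * Real.log (R ε) with hudef
  have huε : ∀ ε, u ε = p * Real.log (R ε) := fun ε => by rw [hudef]
  have he2 : (fun ε => u ε - q * w ε) =O[l] (fun ε : ℝ => ε) := by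
    have heq : (fun ε => u ε - q * w ε)
        = fun ε => p * (Real.log (R ε) - b * w ε) := by
      funext ε; rw [huε, hqdef]; ring
    rw [heq]
    exact hlogbw.const_mul_left p
  have huw : u =O[l] w := by
    have h1 : u = fun ε => (u ε - q * w ε) + q * w ε := by funext ε; ring
    rw [h1]
    exact (he2.trans hid_w).add ((isBigO_refl w l).const_mul_left q)
  have hut : Tendsto u l (𝓝 0) := huw.trans_tendsto hwt
  have hu1 : ∀ᶠ ε in l, |u ε| ≤ 1 := by
    have h := Metric.tendsto_nhds.mp hut 1 (by norm_num)
    filter_upwards [h] with ε hε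
    rw [Real.dist_eq, sub_zero] at hε; exact hε.le
  have he21 : (fun ε => u ε - q * w ε) =O[l] (fun _ : ℝ => (1:ℝ)) := he2.trans hid1
  -- exp remainder
  set E : ℝ → ℝ := fun ε => Real.exp (u ε) - (1 + u ε + u ε ^ 2 / 2) with hEdef
  have hEε : ∀ ε, E ε = Real.exp (u ε) - (1 + u ε + u ε ^ 2 / 2) := fun ε => by rw [hEdef]
  have hEO : E =O[l] (fun ε : ℝ => ε) := by
    refine IsBigO.trans ?_ (hcube u huw)
    rw [isBigO_iff]
    refine ⟨1, ?_⟩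
    filter_upwards [hu1] with ε h
    have := exp_taylor_aux h
    rw [Real.norm_eq_abs, Real.norm_eq_abs, hEε]
    calc |Real.exp (u ε) - (1 + u ε + u ε ^ 2 / 2)| ≤ |u ε| ^ 3 := this
      _ = 1 * |u ε * u ε * u ε| := by rw [← habs3, one_mul]
  -- pi identities
  have hπmδ : ∀ ε, πm ε = πs - δ ε := by
    intro ε; rw [hπm, hπs, hδε]
    exact (sub_div _ _ _)
  have hπpδ : ∀ ε, πp ε = πs + δ ε := by
    intro ε; rw [hπp, hπs, hδε]
    exact (add_div _ _ _)
  have hnpt : Tendsto (fun ε => πp ε * (1 - πp ε)) l (𝓝 (πs * (1 - πs))) := by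
    have heq : (fun ε => πp ε * (1 - πp ε)) = fun ε => (πs + δ ε) * (1 - (πs + δ ε)) := by
      funext ε; rw [hπpδ]
    rw [heq]
    have h0 : (πs * (1 - πs)) = (πs + 0) * (1 - (πs + 0)) := by ring
    rw [h0]
    exact ((tendsto_const_nhds.add hδt).mul
      (tendsto_const_nhds.sub (tendsto_const_nhds.add hδt)))
  have hnp1 : (fun ε => πp ε * (1 - πp ε)) =O[l] (fun _ : ℝ => (1:ℝ)) :=
    hnpt.isBigO_one ℝ
  -- the numerator function
  set Num : ℝ → ℝ := fun ε => w ε * (πm ε * (1 - πm ε)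
      + πp ε * (1 - πp ε) * Real.exp (u ε))
      - 2 * X / q * (Real.exp (u ε) - 1) with hNumdef
  have hNid : ∀ ε, Num ε
      = (-2) * (w ε * δ ε * δ ε)
        - ((2 * πs - 1) * δ ε + δ ε * δ ε) * w ε * u ε
        + (1/2) * (πp ε * (1 - πp ε) * (w ε * u ε * u ε))
        + πp ε * (1 - πp ε) * (w ε * E ε)
        - X * (w ε * (u ε - q * w ε))
        - (2 * X / q) * (u ε - q * w ε)
        - (X / q) * ((u ε - q * w ε) * (u ε - q * w ε))
        - (2 * X / q) * E ε := by
    intro ε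
    have hexpE : Real.exp (u ε) = 1 + u ε + u ε ^ 2 / 2 + E ε := by
      rw [hEε]; ring
    rw [hNumdef]
    simp only []
    rw [hexpE, hπmδ ε, hπpδ ε, hXdef]
    field_simp
    ring
  have hNO : Num =O[l] (fun ε : ℝ => ε) := by
    have heq : Num = fun ε =>
        (-2) * (w ε * δ ε * δ ε)
        - ((2 * πs - 1) * δ ε + δ ε * δ ε) * w ε * u ε
        + (1/2) * (πp ε * (1 - πp ε) * (w ε * u ε * u ε))
        + πp ε * (1 - πp ε) * (w ε * E ε)
        - X * (w ε * (u ε - q * w ε))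
        - (2 * X / q) * (u ε - q * w ε)
        - (X / q) * ((u ε - q * w ε) * (u ε - q * w ε))
        - (2 * X / q) * E ε := funext hNid
    rw [heq]
    have h1 : (fun ε => w ε * δ ε * δ ε) =O[l] (fun ε : ℝ => ε) :=
      hOwww w δ δ (isBigO_refl w l) hδw hδw
    have hkδ : (fun ε => (2 * πs - 1) * δ ε + δ ε * δ ε) =O[l] w :=
      (hδw.const_mul_left _).add hδδw
    have h2 : (fun ε => ((2 * πs - 1) * δ ε + δ ε * δ ε) * w ε * u ε) =O[l] (fun ε : ℝ => ε) :=
      hOwww _ w u hkδ (isBigO_refl w l) huw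
    have h3 : (fun ε => πp ε * (1 - πp ε) * (w ε * u ε * u ε)) =O[l] (fun ε : ℝ => ε) := by
      have := hnp1.mul (hOwww w u u (isBigO_refl w l) huw huw)
      refine this.trans (isBigO_of_le _ (fun ε => by simp))
    have hwE : (fun ε => w ε * E ε) =O[l] (fun ε : ℝ => ε) := by
      have := hw1.mul hEO
      refine this.trans (isBigO_of_le _ (fun ε => by simp))
    have h4 : (fun ε => πp ε * (1 - πp ε) * (w ε * E ε)) =O[l] (fun ε : ℝ => ε) := by
      have := hnp1.mul hwE
      refine this.trans (isBigO_of_le _ (fun ε => by simp))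
    have h5 : (fun ε => w ε * (u ε - q * w ε)) =O[l] (fun ε : ℝ => ε) := by
      have := hw1.mul he2
      refine this.trans (isBigO_of_le _ (fun ε => by simp))
    have h7 : (fun ε => (u ε - q * w ε) * (u ε - q * w ε)) =O[l] (fun ε : ℝ => ε) := by
      have := he2.mul he21
      refine this.trans (isBigO_of_le _ (fun ε => by simp))
    exact ((((((((h1.const_mul_left (-2)).sub h2).add
      (h3.const_mul_left (1/2))).add h4).sub
      (h5.const_mul_left X)).sub (he2.const_mul_left (2 * X / q))).sub
      (h7.const_mul_left (X / q))).sub (hEO.const_mul_left (2 * X / q)))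
  -- lower bound on |exp u - 1|
  obtain ⟨K₂, hK₂⟩ := isBigO_iff.mp he2
  have he2small : ∀ᶠ ε in l, |u ε - q * w ε| ≤ |q| / 2 * w ε := by
    have hq2 : 0 < |q| := abs_pos.mpr hq0
    set r : ℝ := min 1 (|q| / (2 * (max K₂ 1))) with hrdef
    have hr0 : 0 < r := by
      refine lt_min (by norm_num) ?_
      have : (0:ℝ) < max K₂ 1 := lt_of_lt_of_le one_pos (le_max_right _ _)
      positivity
    have hwr := Metric.tendsto_nhds.mp hwt r hr0
    filter_upwards [hK₂, hwr, hwpos, hpos, hw3] with ε h1 h2 h3 h4 h5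
    rw [Real.dist_eq, sub_zero, abs_of_pos h3] at h2
    rw [Real.norm_eq_abs, Real.norm_eq_abs, abs_of_pos h4] at h1
    have hK1 : 0 < max K₂ 1 := lt_of_lt_of_le one_pos (le_max_right _ _)
    have hstep : K₂ * ε ≤ |q| / 2 * w ε := by
      have hr1 : r ≤ 1 := min_le_left _ _
      have hr2 : r ≤ |q| / (2 * max K₂ 1) := min_le_right _ _
      have hw2 : w ε * w ε ≤ |q| / (2 * max K₂ 1) := by
        calc w ε * w ε ≤ r * r := by nlinarith
          _ ≤ 1 * r := by nlinarith
          _ ≤ |q| / (2 * max K₂ 1) := by rw [one_mul]; exact hr2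
      have hK₂le : K₂ ≤ max K₂ 1 := le_max_left _ _
      have hnn : 0 ≤ w ε * w ε := by positivity
      calc K₂ * ε = K₂ * (w ε * w ε * w ε) := by rw [h5]
        _ ≤ max K₂ 1 * (w ε * w ε) * w ε := by nlinarith
        _ ≤ max K₂ 1 * (|q| / (2 * max K₂ 1)) * w ε := by
            gcongr
        _ = |q| / 2 * w ε := by field_simp
    exact le_trans h1 hstep
  have hulow : ∀ᶠ ε in l, |q| / 2 * w ε ≤ |u ε| := by
    filter_upwards [he2small, hwpos] with ε h1 h2
    have h3 : |q * w ε| ≤ |u ε| + |u ε - q * w ε| := by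
      calc |q * w ε| = |u ε + -(u ε - q * w ε)| := by congr 1; ring
        _ ≤ |u ε| + |-(u ε - q * w ε)| := abs_add_le _ _
        _ = |u ε| + |u ε - q * w ε| := by rw [abs_neg]
    rw [abs_mul, abs_of_pos h2] at h3

    linarith
  have hlow : ∀ᶠ ε in l, |q| / 6 * w ε ≤ |Real.exp (u ε) - 1| := by
    filter_upwards [hulow, hu1, hwpos] with ε h1 h2 h3
    have h4 := exp_lower_aux h2
    calc |q| / 6 * w ε = (|q| / 2 * w ε) / 3 := by ring
      _ ≤ |u ε| / 3 := by linarith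
      _ ≤ |Real.exp (u ε) - 1| := h4
  -- final assembly
  obtain ⟨K, hK⟩ := isBigO_iff.mp hNO
  rw [isBigO_iff]
  refine ⟨σ ^ 2 * |p| / 2 * (6 * K / |q|), ?_⟩
  have hfinal : ∀ᶠ ε in l, WeT ε - C * ε ^ (-(1:ℝ)/3)
      = σ ^ 2 * p / 2 * Num ε / ((Real.exp (u ε) - 1) * w ε) := by
    filter_upwards [hRpos, hlow, hwpos, hpos] with ε hR0 hlo hw0 hε0
    have heU0 : (0:ℝ) < Real.exp (u ε) := Real.exp_pos _
    have heU1 : Real.exp (u ε) - 1 ≠ 0 := by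
      intro h
      rw [h] at hlo
      have : 0 < |q| / 6 * w ε := by
        have : 0 < |q| := abs_pos.mpr hq0
        positivity
      simp at hlo
      linarith
    have heUne1 : Real.exp (u ε) ≠ 1 := fun h => heU1 (by rw [h]; ring)
    have hx1 : R ε ^ p = Real.exp (u ε) := by
      rw [Real.rpow_def_of_pos hR0, huε, mul_comm]
    have hx2 : R ε ^ (1 - 2 * μ / σ ^ 2) = (Real.exp (u ε))⁻¹ := by
      have hexp : 1 - 2 * μ / σ ^ 2 = -p := by rw [hpdef]; ring
      rw [hexp, Real.rpow_neg hR0.le, hx1]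
    have hinvne : (Real.exp (u ε))⁻¹ - 1 ≠ 0 := by
      intro h
      apply heUne1
      have : (Real.exp (u ε))⁻¹ = 1 := by linarith [sub_eq_zero.mp h]
      rw [← inv_inv (Real.exp (u ε)), this, inv_one]
    have hεw : ε ^ (-(1:ℝ)/3) = (w ε)⁻¹ := by
      rw [hwε, show (-(1:ℝ)/3) = -((1:ℝ)/3) by norm_num, Real.rpow_neg hε0.le]
    rw [hWeT]
    simp only []
    rw [hx1, hx2, hεw, hNumdef]
    simp only []
    rw [hCval]
    have hwne : w ε ≠ 0 := hw0.ne'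
    generalize hg : Real.exp (u ε) = eU at heU1 hinvne heU0 ⊢
    clear_value X A a b p q C w δ u E Num n1 n2
    have h1mv : (1:ℝ) - eU ≠ 0 := fun h => heU1 (by linarith)
    have hv : eU⁻¹ - 1 = -(eU - 1) / eU := by field_simp; ring
    rw [hv]
    field_simp [heU1, h1mv, hq0, hwne, heU0.ne']
    ring
  filter_upwards [hfinal, hK, hlow, hwpos, hpos, hw3] with ε h1 h2 h3 h4 h5 h6
  rw [h1, Real.norm_eq_abs, Real.norm_eq_abs, abs_of_pos h4]
  rw [Real.norm_eq_abs, Real.norm_eq_abs, abs_of_pos h5] at h2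
  have hq2 : 0 < |q| := abs_pos.mpr hq0
  have hNnn : (0:ℝ) ≤ |Num ε| := abs_nonneg _
  have hKε : 0 ≤ K * ε := le_trans (le_trans hNnn h2) (le_refl _)
  have hden : 0 < |Real.exp (u ε) - 1| * w ε := by
    have h7 : 0 < |q| / 6 * w ε := by positivity
    nlinarith
  have habs : |σ ^ 2 * p / 2 * Num ε / ((Real.exp (u ε) - 1) * w ε)|
      = σ ^ 2 * |p| / 2 * |Num ε| / (|Real.exp (u ε) - 1| * w ε) := by
    rw [abs_div, abs_mul, abs_mul, abs_div, abs_mul]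
    rw [abs_of_pos h4, abs_of_nonneg hσ2.le, abs_of_pos (by norm_num : (0:ℝ) < 2)]
  rw [habs]
  have hb1 : σ ^ 2 * |p| / 2 * |Num ε| / (|Real.exp (u ε) - 1| * w ε)
      ≤ σ ^ 2 * |p| / 2 * (K * ε) / ((|q| / 6 * w ε) * w ε) := by
    apply div_le_div₀ (by positivity)
    · have h8 : 0 ≤ σ ^ 2 * |p| / 2 := by positivity
      nlinarith
    · positivity
    · nlinarith
  refine le_trans hb1 (le_of_eq ?_)
  have h9 : K * ε = K * (w ε * w ε * w ε) := by rw [h6]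
  rw [h9]
  field_simp
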